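/- For n ≥ 0 let Gₙ = ⟨a₀, ..., aₙ | a_{i+1}(aᵢ a_{i+2}) a_{i+1}⁻¹ = (aᵢ a_{i+2})² for 0 ≤ i ≤ n−2⟩. For every n ≥ 2: the element a_{n−1} has infinite order in G_{n−1}, the element α has infinite order in BS(1,2) = ⟨α, β | α β α⁻¹ = β²⟩, and Gₙ is isomorphic to the amalgamated free product G_{n−1} ∗_ℤ BS(1,2), where the amalgamation identifies the infinite cyclic subgroup of G_{n−1} generated by a_{n−1} with the infinite cyclic subgroup of BS(1,2) generated by α; the isomorphism sends aᵢ ↦ aᵢ for 0 ≤ i ≤ n−1 and aₙ ↦ a_{n−2}⁻¹ β. -/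

import Mathlib

namespace AmalgamDecomp

/-- The relators `a_{i+1} (aᵢ a_{i+2}) a_{i+1}⁻¹ ((aᵢ a_{i+2})²)⁻¹` for `0 ≤ i ≤ n - 2`,
on the generators `a₀, …, aₙ`. -/
def grels (n : ℕ) : Set (FreeGroup (Fin (n + 1))) :=
  {r | ∃ (i : ℕ) (h : i + 2 ≤ n),
    r = FreeGroup.of ⟨i + 1, by omega⟩ *
        (FreeGroup.of ⟨i, by omega⟩ * FreeGroup.of ⟨i + 2, by omega⟩) *
        (FreeGroup.of ⟨i + 1, by omega⟩)⁻¹ *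
        ((FreeGroup.of ⟨i, by omega⟩ * FreeGroup.of ⟨i + 2, by omega⟩) ^ 2)⁻¹}

/-- `Gₙ = ⟨a₀, …, aₙ | a_{i+1}(aᵢ a_{i+2})a_{i+1}⁻¹ = (aᵢ a_{i+2})², 0 ≤ i ≤ n-2⟩`. -/
abbrev Gp (n : ℕ) : Type := PresentedGroup (grels n)

/-- The single relator `α β α⁻¹ β⁻²` of the Baumslag–Solitar group `BS(1,2)`, with
`α = of true` and `β = of false`. -/
def bsRels : Set (FreeGroup Bool) :=
  {FreeGroup.of true * FreeGroup.of false * (FreeGroup.of true)⁻¹ *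
    ((FreeGroup.of false) ^ 2)⁻¹}

/-- The Baumslag–Solitar group `BS(1,2) = ⟨α, β | α β α⁻¹ = β²⟩`. -/
abbrev BS : Type := PresentedGroup bsRels

/-- The two-element family of groups `{G_k, BS(1,2)}` over which we take the pushout. -/
def fam (k : ℕ) : Bool → Type
  | true => Gp k
  | false => BS

instance (k : ℕ) : (b : Bool) → Group (fam k b)
  | true => inferInstanceAs (Group (Gp k))
  | false => inferInstanceAs (Group BS)

/-- The amalgamating maps `ℤ → G_k` (sending the generator to `a_k`) and
`ℤ → BS(1,2)` (sending the generator to `α`). -/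
def famφ (k : ℕ) : (b : Bool) → Multiplicative ℤ →* fam k b
  | true => zpowersHom (Gp k) (PresentedGroup.of ⟨k, Nat.lt_succ_self k⟩)
  | false => zpowersHom BS (PresentedGroup.of true)

open Monoid

lemma mk_rel_eq_one {α : Type*} {rels : Set (FreeGroup α)} {r : FreeGroup α} (hr : r ∈ rels) :
    PresentedGroup.mk rels r = 1 :=
  (QuotientGroup.eq_one_iff r).mpr (Subgroup.subset_normalClosure hr)

lemma grel_eq_one {k i : ℕ} (h : i + 2 ≤ k) :
    (PresentedGroup.of ⟨i + 1, by omega⟩ : Gp k) *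
      (PresentedGroup.of ⟨i, by omega⟩ * PresentedGroup.of ⟨i + 2, by omega⟩) *
      (PresentedGroup.of ⟨i + 1, by omega⟩)⁻¹ *
      ((PresentedGroup.of ⟨i, by omega⟩ * PresentedGroup.of ⟨i + 2, by omega⟩) ^ 2)⁻¹ = 1 := by
  have h1 := mk_rel_eq_one (rels := grels k) ⟨i, h, rfl⟩
  simpa only [map_mul, map_inv, map_pow, PresentedGroup.of] using h1

lemma bsrel_eq_one :
    (PresentedGroup.of true : BS) * PresentedGroup.of false * (PresentedGroup.of true)⁻¹ *
      ((PresentedGroup.of false : BS) ^ 2)⁻¹ = 1 := by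
  have h1 := mk_rel_eq_one (rels := bsRels) (Set.mem_singleton _)
  simpa only [map_mul, map_inv, map_pow, PresentedGroup.of] using h1

lemma bsRels_eq {r : FreeGroup Bool} (hr : r ∈ bsRels) :
    r = FreeGroup.of true * FreeGroup.of false * (FreeGroup.of true)⁻¹ *
      ((FreeGroup.of false) ^ 2)⁻¹ := hr

lemma not_finOrder_ofAdd {s : ℤ} (hs : s ≠ 0) :
    ¬ IsOfFinOrder (Multiplicative.ofAdd s) := by
  intro h
  obtain ⟨k, hk, h1⟩ := isOfFinOrder_iff_pow_eq_one.mp h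
  have h2 := congrArg Multiplicative.toAdd h1
  simp only [toAdd_pow, toAdd_ofAdd, toAdd_one, smul_eq_mul] at h2
  rcases mul_eq_zero.mp h2 with h3 | h3
  · exact Nat.cast_ne_zero.mpr hk.ne' h3
  · exact hs h3

def gpDeg (k : ℕ) : Gp k →* Multiplicative ℤ :=
  PresentedGroup.toGroup
    (f := fun j : Fin (k + 1) => Multiplicative.ofAdd (if (j : ℕ) % 4 < 2 then (1 : ℤ) else -1))
    (by
      rintro r ⟨i, h, rfl⟩
      simp only [map_mul, map_inv, map_pow, FreeGroup.lift_apply_of]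
      have key : Multiplicative.ofAdd
            (if ((⟨i + 2, by omega⟩ : Fin (k + 1)) : ℕ) % 4 < 2 then (1 : ℤ) else -1)
          = (Multiplicative.ofAdd
            (if ((⟨i, by omega⟩ : Fin (k + 1)) : ℕ) % 4 < 2 then (1 : ℤ) else -1))⁻¹ := by
        rw [← ofAdd_neg]
        congr 1
        show (if (i + 2) % 4 < 2 then (1 : ℤ) else -1) = -(if i % 4 < 2 then (1 : ℤ) else -1)
        omega
      rw [key]
      group)

lemma gp_gen_inf (k : ℕ) (j : Fin (k + 1)) :
    ¬ IsOfFinOrder (PresentedGroup.of j : Gp k) := by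
  intro h
  have h2 := (gpDeg k).isOfFinOrder h
  rw [show gpDeg k (PresentedGroup.of j)
      = Multiplicative.ofAdd (if (j : ℕ) % 4 < 2 then (1 : ℤ) else -1) from
    PresentedGroup.toGroup.of _] at h2
  exact not_finOrder_ofAdd (by split_ifs <;> norm_num) h2

def bsDeg : BS →* Multiplicative ℤ :=
  PresentedGroup.toGroup
    (f := fun b : Bool => if b then Multiplicative.ofAdd (1 : ℤ) else 1)
    (by
      intro r hr
      rw [bsRels_eq hr]
      simp only [map_mul, map_inv, map_pow, FreeGroup.lift_apply_of, Bool.false_eq_true, if_false, if_true]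
      group)

lemma bs_alpha_inf : ¬ IsOfFinOrder (PresentedGroup.of true : BS) := by
  intro h
  have h2 := bsDeg.isOfFinOrder h
  rw [show bsDeg (PresentedGroup.of true) = Multiplicative.ofAdd (1 : ℤ) from
    PresentedGroup.toGroup.of _] at h2
  exact not_finOrder_ofAdd one_ne_zero h2

/-! main construction, with `n = m + 2` -/

lemma zpowersHom_one {G : Type*} [Group G] (x : G) :
    zpowersHom G x (Multiplicative.ofAdd 1) = x := by
  rw [zpowersHom_apply, toAdd_ofAdd, zpow_one]

lemma famφ_true (k : ℕ) :
    famφ k true (Multiplicative.ofAdd 1) = PresentedGroup.of ⟨k, Nat.lt_succ_self k⟩ :=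
  zpowersHom_one _

lemma famφ_false (k : ℕ) :
    famφ k false (Multiplicative.ofAdd 1) = (PresentedGroup.of true : BS) :=
  zpowersHom_one _

def fTgen (m : ℕ) (j : Fin (m + 2)) : Gp (m + 2) :=
  PresentedGroup.of ⟨(j : ℕ), by omega⟩

def fT (m : ℕ) : Gp (m + 1) →* Gp (m + 2) :=
  PresentedGroup.toGroup
    (f := fTgen m)
    (by
      rintro r ⟨i, h, rfl⟩
      simp only [map_mul, map_inv, map_pow, FreeGroup.lift_apply_of, fTgen]
      exact grel_eq_one (by omega))

lemma fT_of (m : ℕ) (j : Fin (m + 2)) :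
    fT m (PresentedGroup.of j) = PresentedGroup.of ⟨(j : ℕ), by omega⟩ :=
  PresentedGroup.toGroup.of _

def fBgen (m : ℕ) : Bool → Gp (m + 2)
  | true => PresentedGroup.of ⟨m + 1, by omega⟩
  | false => PresentedGroup.of ⟨m, by omega⟩ * PresentedGroup.of ⟨m + 2, by omega⟩

def fB (m : ℕ) : BS →* Gp (m + 2) :=
  PresentedGroup.toGroup
    (f := fBgen m)
    (by
      intro r hr
      rw [bsRels_eq hr]
      simp only [map_mul, map_inv, map_pow, FreeGroup.lift_apply_of, fBgen]
      exact grel_eq_one (le_refl (m + 2)))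

lemma fB_true (m : ℕ) :
    fB m (PresentedGroup.of true) = (PresentedGroup.of ⟨m + 1, by omega⟩ : Gp (m + 2)) :=
  PresentedGroup.toGroup.of _

lemma fB_false (m : ℕ) :
    fB m (PresentedGroup.of false)
      = (PresentedGroup.of ⟨m, by omega⟩ : Gp (m + 2)) * PresentedGroup.of ⟨m + 2, by omega⟩ :=
  PresentedGroup.toGroup.of _

lemma fT_of_mk (m i : ℕ) (pf : i < m + 2) :
    fT m (PresentedGroup.of ⟨i, pf⟩) = (PresentedGroup.of ⟨i, by omega⟩ : Gp (m + 2)) :=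
  PresentedGroup.toGroup.of _

def Bk (m : ℕ) : PushoutI (famφ (m + 1)) →* Gp (m + 2) :=
  PushoutI.lift
    (fun b => match b with
      | true => fT m
      | false => fB m)
    (zpowersHom _ (PresentedGroup.of ⟨m + 1, by omega⟩ : Gp (m + 2)))
    (by
      intro b
      apply MonoidHom.ext_mint
      rw [MonoidHom.comp_apply, zpowersHom_one]
      cases b
      · rw [famφ_false]; exact fB_true m
      · rw [famφ_true]; exact fT_of m ⟨m + 1, by omega⟩)

lemma Bk_of_true (m : ℕ) (x : Gp (m + 1)) :
    Bk m (PushoutI.of (φ := famφ (m + 1)) true x) = fT m x :=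
  PushoutI.lift_of _ _ _ _

lemma Bk_of_false (m : ℕ) (x : BS) :
    Bk m (PushoutI.of (φ := famφ (m + 1)) false x) = fB m x :=
  PushoutI.lift_of _ _ _ _

def fFgen (m : ℕ) : Fin (m + 3) → PushoutI (famφ (m + 1)) := fun j =>
  if h : (j : ℕ) ≤ m + 1 then
    PushoutI.of (φ := famφ (m + 1)) true (PresentedGroup.of ⟨(j : ℕ), by omega⟩)
  else
    (PushoutI.of (φ := famφ (m + 1)) true (PresentedGroup.of ⟨m, by omega⟩))⁻¹ *
      PushoutI.of (φ := famφ (m + 1)) false (PresentedGroup.of false)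

lemma fFgen_le (m : ℕ) (j : Fin (m + 3)) (hj : (j : ℕ) ≤ m + 1) :
    fFgen m j = PushoutI.of (φ := famφ (m + 1)) true (PresentedGroup.of ⟨(j : ℕ), by omega⟩) :=
  dif_pos hj

lemma fFgen_top (m : ℕ) (j : Fin (m + 3)) (hj : ¬ (j : ℕ) ≤ m + 1) :
    fFgen m j = (PushoutI.of (φ := famφ (m + 1)) true (PresentedGroup.of ⟨m, by omega⟩))⁻¹ *
      PushoutI.of (φ := famφ (m + 1)) false (PresentedGroup.of false) :=
  dif_neg hj

lemma fFgen_mk (m i : ℕ) (pf : i < m + 3) (hi : i ≤ m + 1) :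
    fFgen m ⟨i, pf⟩ = PushoutI.of (φ := famφ (m + 1)) true (PresentedGroup.of ⟨i, by omega⟩) :=
  dif_pos hi

lemma of_true_top (m : ℕ) :
    PushoutI.of (φ := famφ (m + 1)) true
        (PresentedGroup.of ⟨m + 1, Nat.lt_succ_self _⟩ : Gp (m + 1)) =
      PushoutI.of (φ := famφ (m + 1)) false (PresentedGroup.of true : BS) := by
  rw [← famφ_true (m + 1), ← famφ_false (m + 1),
    PushoutI.of_apply_eq_base, PushoutI.of_apply_eq_base]

def Fk (m : ℕ) : Gp (m + 2) →* PushoutI (famφ (m + 1)) :=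
  PresentedGroup.toGroup (f := fFgen m)
    (by
      rintro r ⟨i, h, rfl⟩
      simp only [map_mul, map_inv, map_pow, FreeGroup.lift_apply_of]
      by_cases hc : i + 2 ≤ m + 1
      · rw [fFgen_mk m (i + 1) (by omega) (by omega),
          fFgen_mk m i (by omega) (by omega),
          fFgen_mk m (i + 2) (by omega) hc]
        have h9 := congrArg ((PushoutI.of (φ := famφ (m + 1)) true).comp (MonoidHom.id (Gp (m + 1))))
          (grel_eq_one (show i + 2 ≤ m + 1 from hc))
        rw [map_one] at h9
        simp only [map_mul, map_inv, map_pow] at h9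
        exact h9
      · have hi : m = i := by omega
        subst hi
        rw [fFgen_mk m (m + 1) (by omega) (by omega),
          fFgen_mk m m (by omega) (by omega),
          fFgen_top m _ (show ¬ m + 2 ≤ m + 1 by omega)]
        simp only [mul_inv_cancel_left]
        rw [of_true_top m]
        have h9 := congrArg ((PushoutI.of (φ := famφ (m + 1)) false).comp (MonoidHom.id BS)) bsrel_eq_one
        rw [map_one] at h9
        simp only [map_mul, map_inv, map_pow] at h9
        exact h9)

lemma Fk_of (m : ℕ) (j : Fin (m + 3)) :
    Fk m (PresentedGroup.of j) = fFgen m j :=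
  PresentedGroup.toGroup.of _

lemma BF_id (m : ℕ) : (Bk m).comp (Fk m) = MonoidHom.id (Gp (m + 2)) := by
  apply PresentedGroup.ext
  intro j
  simp only [MonoidHom.comp_apply, MonoidHom.id_apply, Fk_of]
  by_cases hj : (j : ℕ) ≤ m + 1
  · rw [fFgen_le m j hj, Bk_of_true, fT_of]
  · rw [fFgen_top m j hj]
    rw [map_mul, map_inv, Bk_of_true, Bk_of_false, fT_of, fB_false]
    rw [inv_mul_cancel_left]
    have hje : (⟨m + 2, by omega⟩ : Fin (m + 3)) = j := by
      apply Fin.ext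
      have := j.isLt
      show m + 2 = (j : ℕ)
      omega
    rw [← hje]

lemma FB_id (m : ℕ) :
    (Fk m).comp (Bk m) = MonoidHom.id (PushoutI (famφ (m + 1))) := by
  apply PushoutI.hom_ext_nonempty
  intro b
  cases b
  · apply PresentedGroup.ext
    intro x
    show (Fk m) ((Bk m) (PushoutI.of (φ := famφ (m + 1)) false (PresentedGroup.of x)))
      = PushoutI.of (φ := famφ (m + 1)) false (PresentedGroup.of x)
    rw [Bk_of_false]
    cases x
    · rw [fB_false, map_mul, Fk_of, Fk_of,
        fFgen_mk m m (by omega) (by omega),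
        fFgen_top m _ (show ¬ m + 2 ≤ m + 1 by omega)]
      rw [mul_inv_cancel_left]
    · rw [fB_true, Fk_of, fFgen_mk m (m + 1) (by omega) (by omega)]
      exact of_true_top m
  · apply PresentedGroup.ext
    intro i
    show (Fk m) ((Bk m) (PushoutI.of (φ := famφ (m + 1)) true (PresentedGroup.of i)))
      = PushoutI.of (φ := famφ (m + 1)) true (PresentedGroup.of i)
    rw [Bk_of_true, fT_of, Fk_of, fFgen_le m _ (show (i : ℕ) ≤ m + 1 from Nat.lt_succ_iff.mp i.isLt)]

end AmalgamDecomp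

open AmalgamDecomp Monoid in
theorem Gn_iso_amalgam (n : ℕ) (hn : 2 ≤ n) :
    ¬ IsOfFinOrder
      (PresentedGroup.of (⟨n - 1, Nat.lt_succ_self _⟩ : Fin (n - 1 + 1)) : Gp (n - 1)) ∧
    ¬ IsOfFinOrder (PresentedGroup.of true : BS) ∧
    ∃ e : Gp n ≃* PushoutI (famφ (n - 1)),
      (∀ (i : ℕ) (hi : i ≤ n - 1),
        e (PresentedGroup.of ⟨i, by omega⟩) =
          PushoutI.of (φ := famφ (n - 1)) true (PresentedGroup.of ⟨i, by omega⟩)) ∧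
      e (PresentedGroup.of ⟨n, Nat.lt_succ_self n⟩) =
        (PushoutI.of (φ := famφ (n - 1)) true (PresentedGroup.of ⟨n - 2, by omega⟩))⁻¹ *
          PushoutI.of (φ := famφ (n - 1)) false (PresentedGroup.of false) := by
  obtain ⟨m, rfl⟩ : ∃ m, n = m + 2 := ⟨n - 2, by omega⟩
  refine ⟨gp_gen_inf (m + 1) _, bs_alpha_inf,
    MonoidHom.toMulEquiv (Fk m) (Bk m) (BF_id m) (FB_id m), ?_, ?_⟩
  · intro i hi
    show Fk m (PresentedGroup.of ⟨i, _⟩) = _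
    rw [Fk_of, fFgen_le m _ (show i ≤ m + 1 from hi)]
  · show Fk m (PresentedGroup.of ⟨m + 2, _⟩) = _
    rw [Fk_of, fFgen_top m _ (show ¬ m + 2 ≤ m + 1 by omega)]
    rfl
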